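/- Let p,q ≥ 0 with p+q < 1 and 0 < θ < 1, and let (α*, d*) be a minimizer of max{b1(α,d), b2(α,d)} over d ∈ (0,∞) and α ∈ (q, e^{−d}(1−p)+(1−e^{−d})q) (the optimization defining m_COMP). If e^{−d*}·p ≥ q, then m_COMP(n,θ,p,q) ≥ m_DD(n,θ,p,q). -/

import Mathlib

open Real Set

noncomputable section

/-- KL divergence between Bernoulli(r) and Bernoulli(s) (natural log, boundary by continuity). -/
def klBer (r s : ℝ) : ℝ := r * Real.log (r / s) + (1 - r) * Real.log ((1 - r) / (1 - s))

def b1 (θ q α d : ℝ) : ℝ := θ / (1 - θ) * (1 / (d * klBer α q))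

def b2 (θ p q α d : ℝ) : ℝ :=
  1 / (1 - θ) * (1 / (d * klBer α (Real.exp (-d) * (1 - p) + (1 - Real.exp (-d)) * q)))

def compSet (θ p q : ℝ) : Set ℝ :=
  {x | ∃ d α : ℝ, 0 < d ∧
    α ∈ Set.Ioo q (Real.exp (-d) * (1 - p) + (1 - Real.exp (-d)) * q) ∧
    x = max (b1 θ q α d) (b2 θ p q α d)}

def wDD (p q d : ℝ) : ℝ := Real.exp (-d) * p + (1 - Real.exp (-d)) * (1 - q)

def c1 (θ q α d : ℝ) : ℝ := θ / (1 - θ) * (1 / (d * klBer α q))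

def c2 (p q α d : ℝ) : ℝ := 1 / (d * klBer α (1 - wDD p q d))

def c3 (θ q β d : ℝ) : ℝ := θ / (1 - θ) * (1 / (d * klBer β ((1 - q) * Real.exp (-d))))

def c4 (θ p q α β d : ℝ) : ℝ :=
  sSup {x | ∃ z ∈ Set.Icc (1 - α) 1,
    x = 1 / (1 - θ) * (1 / (d * (klBer z (wDD p q d) +
      (if β > z * (Real.exp (-d) * p) / wDD p q d then
        z * klBer (β / z) (Real.exp (-d) * p / wDD p q d) else 0))))}

def ddSet (θ p q : ℝ) : Set ℝ :=
  {x | ∃ d α β : ℝ, 0 < d ∧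
    α ∈ Set.Ioo q (Real.exp (-d) * (1 - p) + (1 - Real.exp (-d)) * q) ∧
    β ∈ Set.Ioo 0 (Real.exp (-d) * (1 - q)) ∧
    x = max (max (c1 θ q α d) (c2 p q α d)) (max (c3 θ q β d) (c4 θ p q α β d))}

/-- `m_COMP(n,θ,p,q)` for `k = ⌈n^θ⌉`. -/
def mCOMP (n : ℕ) (θ p q : ℝ) : ℝ :=
  sInf (compSet θ p q) *
    ((⌈(n : ℝ) ^ θ⌉₊ : ℝ) * Real.log (n / (⌈(n : ℝ) ^ θ⌉₊ : ℝ)))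

/-- `m_DD(n,θ,p,q)` for `k = ⌈n^θ⌉`. -/
def mDD (n : ℕ) (θ p q : ℝ) : ℝ :=
  sInf (ddSet θ p q) *
    ((⌈(n : ℝ) ^ θ⌉₊ : ℝ) * Real.log (n / (⌈(n : ℝ) ^ θ⌉₊ : ℝ)))

/-! ### Auxiliary lemmas -/

lemma sub_le_mul_log_div {a b : ℝ} (ha : 0 ≤ a) (hb : 0 < b) :
    a - b ≤ a * Real.log (a / b) := by
  rcases eq_or_lt_of_le ha with h | h
  · simp [← h]; linarith
  · have h1 : Real.log (b / a) ≤ b / a - 1 := Real.log_le_sub_one_of_pos (div_pos hb h)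
    have h2 : Real.log (a / b) = - Real.log (b / a) := by
      rw [← Real.log_inv]; congr 1; field_simp
    have h3 : a * (b / a) = b := by field_simp
    nlinarith [mul_le_mul_of_nonneg_left h1 ha]

lemma sub_lt_mul_log_div {a b : ℝ} (ha : 0 < a) (hb : 0 < b) (hne : a ≠ b) :
    a - b < a * Real.log (a / b) := by
  have h1 : Real.log (b / a) < b / a - 1 :=
    Real.log_lt_sub_one_of_pos (div_pos hb ha) (by
      intro h; apply hne; field_simp at h; linarith)
  have h2 : Real.log (a / b) = - Real.log (b / a) := by
    rw [← Real.log_inv]; congr 1; field_simp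
  have h3 : a * (b / a) = b := by field_simp
  nlinarith [mul_lt_mul_of_pos_left h1 ha]

lemma klBer_nonneg {r s : ℝ} (hr0 : 0 ≤ r) (hr1 : r ≤ 1) (hs0 : 0 < s) (hs1 : s < 1) :
    0 ≤ klBer r s := by
  have h1 := sub_le_mul_log_div hr0 hs0
  have h2 := sub_le_mul_log_div (by linarith : (0:ℝ) ≤ 1 - r) (by linarith : (0:ℝ) < 1 - s)
  unfold klBer; linarith

lemma klBer_pos {r s : ℝ} (hr0 : 0 < r) (hr1 : r ≤ 1) (hs0 : 0 < s) (hs1 : s < 1)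
    (hne : r ≠ s) : 0 < klBer r s := by
  have h1 := sub_lt_mul_log_div hr0 hs0 hne
  have h2 := sub_le_mul_log_div (by linarith : (0:ℝ) ≤ 1 - r) (by linarith : (0:ℝ) < 1 - s)
  unfold klBer; linarith

lemma klBer_compl (r s : ℝ) : klBer (1 - r) (1 - s) = klBer r s := by
  unfold klBer
  rw [sub_sub_cancel, sub_sub_cancel]
  ring

lemma klBer_eq {r s : ℝ} (hr0 : 0 < r) (hr1 : r < 1) (hs0 : 0 < s) (hs1 : s < 1) :
    klBer r s = r * (Real.log r - Real.log s) + (1 - r) * (Real.log (1 - r) - Real.log (1 - s)) := by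
  unfold klBer
  rw [Real.log_div hr0.ne' hs0.ne', Real.log_div (by linarith) (by linarith)]

/-- kl(·,s) is increasing to the right of s. -/
lemma klBer_mono {s r1 r2 : ℝ} (hs0 : 0 < s) (hs1 : s < 1) (h1 : s ≤ r1) (h12 : r1 ≤ r2)
    (h2 : r2 ≤ 1) : klBer r1 s ≤ klBer r2 s := by
  rcases eq_or_lt_of_le h12 with h | h
  · rw [h]
  have hr10 : 0 < r1 := lt_of_lt_of_le hs0 h1
  have hr11 : r1 < 1 := lt_of_lt_of_le h h2
  have hA : Real.log s ≤ Real.log r1 := Real.log_le_log hs0 h1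
  have hB : Real.log (1 - r1) ≤ Real.log (1 - s) :=
    Real.log_le_log (by linarith) (by linarith)
  rcases eq_or_lt_of_le h2 with h2e | h2l
  · subst h2e
    have hkl1 : klBer 1 s = - Real.log s := by
      unfold klBer; simp
    rw [hkl1, klBer_eq hr10 hr11 hs0 hs1]
    have hr1le : Real.log r1 ≤ 0 := Real.log_nonpos (le_of_lt hr10) hr11.le
    have hLs : Real.log s < 0 := Real.log_neg hs0 hs1
    nlinarith [mul_nonpos_of_nonneg_of_nonpos (le_of_lt hr10) hr1le,
      mul_le_mul_of_nonneg_left hB (by linarith : (0:ℝ) ≤ 1 - r1)]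
  · have h0 : 0 ≤ klBer r2 r1 := klBer_nonneg (by linarith) h2 hr10 hr11
    rw [klBer_eq (by linarith) h2l hr10 hr11] at h0
    rw [klBer_eq hr10 hr11 hs0 hs1, klBer_eq (by linarith) h2l hs0 hs1]
    nlinarith [mul_le_mul_of_nonneg_left hA (by linarith : (0:ℝ) ≤ r2 - r1),
      mul_le_mul_of_nonneg_left hB (by linarith : (0:ℝ) ≤ r2 - r1)]

/-- kl(·,s) is decreasing to the left of s. -/
lemma klBer_anti {s r1 r2 : ℝ} (h0 : 0 < r1) (h12 : r1 ≤ r2) (h2 : r2 ≤ s) (hs1 : s < 1) :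
    klBer r2 s ≤ klBer r1 s := by
  rcases eq_or_lt_of_le h12 with h | h
  · rw [h]
  have hr20 : 0 < r2 := lt_of_lt_of_le h0 h12
  have hr21 : r2 < 1 := lt_of_le_of_lt h2 hs1
  have hr11 : r1 < 1 := lt_of_lt_of_le h hr21.le
  have hs0 : 0 < s := lt_of_lt_of_le hr20 h2
  have hA : Real.log r2 ≤ Real.log s := Real.log_le_log hr20 h2
  have hB : Real.log (1 - s) ≤ Real.log (1 - r2) :=
    Real.log_le_log (by linarith) (by linarith)
  have h0' : 0 ≤ klBer r1 r2 := klBer_nonneg h0.le hr11.le hr20 hr21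
  rw [klBer_eq h0 hr11 hr20 hr21] at h0'
  rw [klBer_eq h0 hr11 hs0 hs1, klBer_eq hr20 hr21 hs0 hs1]
  nlinarith [mul_le_mul_of_nonneg_left hA (by linarith : (0:ℝ) ≤ r2 - r1),
    mul_le_mul_of_nonneg_left hB (by linarith : (0:ℝ) ≤ r2 - r1)]

/-- kl(r,·) is increasing to the right of r. -/
lemma klBer_mono_s {r s1 s2 : ℝ} (hr0 : 0 < r) (hr : r ≤ s1) (hs : s1 ≤ s2) (hs2 : s2 < 1) :
    klBer r s1 ≤ klBer r s2 := by
  rcases eq_or_lt_of_le hs with h | h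
  · rw [h]
  have hs10 : 0 < s1 := lt_of_lt_of_le hr0 hr
  have hs11 : s1 < 1 := lt_of_lt_of_le h hs2.le
  have hs20 : 0 < s2 := lt_of_lt_of_le hs10 hs
  have hr1 : r < 1 := lt_of_le_of_lt hr hs11
  have h1 : Real.log (s2 / s1) ≤ s2 / s1 - 1 := Real.log_le_sub_one_of_pos (div_pos hs20 hs10)
  have h2 : Real.log ((1 - s2) / (1 - s1)) ≤ (1 - s2) / (1 - s1) - 1 :=
    Real.log_le_sub_one_of_pos (div_pos (by linarith) (by linarith))
  rw [Real.log_div hs20.ne' hs10.ne'] at h1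
  rw [Real.log_div (by linarith : (1:ℝ) - s2 ≠ 0) (by linarith : (1:ℝ) - s1 ≠ 0)] at h2
  have e1 : s2 / s1 - 1 = (s2 - s1) / s1 := by field_simp
  have hne1 : (1:ℝ) - s1 ≠ 0 := by linarith
  have e2 : (1 - s2) / (1 - s1) - 1 = -((s2 - s1) / (1 - s1)) := by
    field_simp
    ring
  rw [e1] at h1; rw [e2] at h2
  rw [klBer_eq hr0 hr1 hs10 hs11, klBer_eq hr0 hr1 hs20 hs2]
  have k1 : r * (Real.log s2 - Real.log s1) ≤ r * ((s2 - s1) / s1) :=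
    mul_le_mul_of_nonneg_left h1 hr0.le
  have k2 : (1 - r) * (Real.log (1 - s2) - Real.log (1 - s1)) ≤ (1 - r) * (-((s2 - s1) / (1 - s1))) :=
    mul_le_mul_of_nonneg_left h2 (by linarith)
  have k3 : r * ((s2 - s1) / s1) ≤ (1 - r) * ((s2 - s1) / (1 - s1)) := by
    rw [mul_div_assoc', mul_div_assoc', div_le_div_iff₀ hs10 (by linarith)]
    nlinarith
  linarith

/-- the extra c4 term is bounded below by -β. -/
lemma extra_ge {z β s : ℝ} (hβ : 0 < β) (hβz : β ≤ z) (hz : z ≤ 1) (hs0 : 0 ≤ s)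
    (hs1 : s < 1) : -β ≤ z * klBer (β / z) s := by
  have hz0 : 0 < z := lt_of_lt_of_le hβ hβz
  rcases eq_or_lt_of_le hs0 with h | h
  · rcases eq_or_lt_of_le hβz with he | he
    · subst he
      have : klBer (β/β) s = 0 := by
        unfold klBer
        rw [div_self hβ.ne']
        simp [← h]
      rw [this]; simp; linarith
    · have hbz1 : β / z < 1 := (div_lt_one hz0).mpr he
      have hpos : 0 < 1 - β/z := by linarith
      have hne : (1:ℝ) - β/z ≠ 0 := ne_of_gt hpos
      have hkl : klBer (β/z) s = (1 - β/z) * Real.log (1 - β/z) := by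
        unfold klBer
        rw [← h]
        simp
      rw [hkl]
      have hlog : Real.log (1 - β/z) ≥ 1 - 1/(1 - β/z) := by
        have h1 : Real.log (1/(1 - β/z)) ≤ 1/(1 - β/z) - 1 :=
          Real.log_le_sub_one_of_pos (by positivity)
        rw [Real.log_div one_ne_zero hne, Real.log_one] at h1
        linarith
      have key : (1 - β/z) * Real.log (1 - β/z) ≥ (1 - β/z) * (1 - 1/(1-β/z)) :=
        mul_le_mul_of_nonneg_left hlog hpos.le
      have hzb : z - β ≠ 0 := ne_of_gt (by linarith)
      have e : (1 - β/z) * (1 - 1/(1-β/z)) = -(β/z) := by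
        field_simp
        ring
      rw [e] at key
      have h5 : z * klBer (β/z) s ≥ z * (-(β/z)) := by
        rw [hkl]; exact mul_le_mul_of_nonneg_left key hz0.le
      have e2 : z * (-(β/z)) = -β := by field_simp
      rw [e2, hkl] at h5
      linarith
  · have : 0 ≤ klBer (β/z) s :=
      klBer_nonneg (by positivity) ((div_le_one hz0).mpr hβz) h hs1
    nlinarith

/-- positivity of the c2/b2 denominator KL term, for any feasible (d, α). -/
lemma klBer_upper_pos (p q : ℝ) (hp : 0 ≤ p) (hq : 0 ≤ q) (hpq : p + q < 1)
    {d α : ℝ} (hd : 0 < d)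
    (hα : α ∈ Set.Ioo q (Real.exp (-d) * (1 - p) + (1 - Real.exp (-d)) * q)) :
    0 < klBer α (1 - wDD p q d) := by
  obtain ⟨hα1, hα2⟩ := hα
  have hE0 : 0 < Real.exp (-d) := Real.exp_pos _
  have hE1 : Real.exp (-d) < 1 := by
    calc Real.exp (-d) < Real.exp 0 := Real.exp_lt_exp.mpr (by linarith)
    _ = 1 := Real.exp_zero
  have hq1 : q < 1 := by linarith
  have hp1 : p < 1 := by linarith
  have hup : Real.exp (-d) * (1 - p) + (1 - Real.exp (-d)) * q = 1 - wDD p q d := by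
    unfold wDD; ring
  rw [hup] at hα2
  have h0 : 0 < α := lt_of_le_of_lt hq hα1
  have hw0 : 0 < wDD p q d := by unfold wDD; nlinarith
  have hw1 : wDD p q d < 1 := by unfold wDD; nlinarith
  exact klBer_pos h0 (by linarith) (by linarith) (by linarith) (ne_of_lt hα2)

lemma F_nonneg (θ : ℝ) (hθ0 : 0 < θ) (hθ1 : θ < 1) (n : ℕ) :
    0 ≤ (⌈(n : ℝ) ^ θ⌉₊ : ℝ) * Real.log (n / (⌈(n : ℝ) ^ θ⌉₊ : ℝ)) := by
  rcases Nat.eq_zero_or_pos n with h | h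
  · subst h
    simp [Real.zero_rpow hθ0.ne']
  · have hn1 : (1:ℝ) ≤ (n:ℝ) := by exact_mod_cast h
    have hpos : (0:ℝ) < (n:ℝ) ^ θ := Real.rpow_pos_of_pos (by linarith) θ
    have hk1 : 1 ≤ ⌈(n : ℝ) ^ θ⌉₊ := Nat.one_le_ceil_iff.mpr hpos
    have hkn : (⌈(n : ℝ) ^ θ⌉₊ : ℝ) ≤ (n:ℝ) := by
      have h1 : (n:ℝ) ^ θ ≤ (n:ℝ) ^ (1:ℝ) := Real.rpow_le_rpow_of_exponent_le hn1 hθ1.le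
      rw [Real.rpow_one] at h1
      exact_mod_cast Nat.ceil_le.mpr h1
    have hkpos : (0:ℝ) < (⌈(n : ℝ) ^ θ⌉₊ : ℝ) := by exact_mod_cast hk1
    apply mul_nonneg (by positivity)
    apply Real.log_nonneg
    rw [le_div_iff₀ hkpos]
    linarith

set_option maxHeartbeats 1600000 in
/-- **DD dominates COMP** (Proposition 2.13). -/
theorem comp_ge_dd
    (p q θ : ℝ)
    (hp : 0 ≤ p) (hq : 0 ≤ q) (hpq : p + q < 1)
    (hθ0 : 0 < θ) (hθ1 : θ < 1)
    (d α : ℝ) (hd : 0 < d)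
    (hα : α ∈ Set.Ioo q (Real.exp (-d) * (1 - p) + (1 - Real.exp (-d)) * q))
    (hopt : IsLeast (compSet θ p q) (max (b1 θ q α d) (b2 θ p q α d)))
    (hcond : q ≤ Real.exp (-d) * p) :
    ∀ n : ℕ, mDD n θ p q ≤ mCOMP n θ p q := by
  intro n
  have hq1 : q < 1 := by linarith
  have hp1 : p < 1 := by linarith
  have hθd : 0 < 1 - θ := by linarith
  have hE0 : 0 < Real.exp (-d) := Real.exp_pos _
  have hE1 : Real.exp (-d) < 1 := by
    calc Real.exp (-d) < Real.exp 0 := Real.exp_lt_exp.mpr (by linarith)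
    _ = 1 := Real.exp_zero
  obtain ⟨hαq, hαu⟩ := hα
  have hα0 : 0 < α := lt_of_le_of_lt hq hαq
  have hup : Real.exp (-d) * (1 - p) + (1 - Real.exp (-d)) * q = 1 - wDD p q d := by
    unfold wDD; ring
  have hw0 : 0 < wDD p q d := by unfold wDD; nlinarith
  have hw1 : wDD p q d < 1 := by unfold wDD; nlinarith
  have hαu' : α < 1 - wDD p q d := hup ▸ hαu
  have hα1 : α < 1 := by linarith
  obtain ⟨K, hKdef⟩ : ∃ K : ℝ, K = klBer α (1 - wDD p q d) := ⟨_, rfl⟩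
  have hK : 0 < K := by
    rw [hKdef]; exact klBer_upper_pos p q hp hq hpq hd ⟨hαq, hαu⟩
  have hs3e : Real.exp (-d) * (1 - q) - (1 - wDD p q d) = Real.exp (-d) * p - q := by
    unfold wDD; ring
  have hs3 : 1 - wDD p q d ≤ Real.exp (-d) * (1 - q) := by linarith
  have hs31 : Real.exp (-d) * (1 - q) < 1 := by nlinarith
  have hb2 : b2 θ p q α d = 1 / (1 - θ) * (1 / (d * K)) := by
    unfold b2; rw [hup, ← hKdef]
  -- ddSet is bounded below
  have hbdd : BddBelow (ddSet θ p q) := by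
    refine ⟨0, ?_⟩
    rintro x ⟨d', α', β', hd', hα', hβ', rfl⟩
    have h2 : 0 < klBer α' (1 - wDD p q d') := klBer_upper_pos p q hp hq hpq hd' hα'
    have h3 : (0:ℝ) ≤ c2 p q α' d' := by
      unfold c2
      exact le_of_lt (one_div_pos.mpr (mul_pos hd' h2))
    exact le_trans h3 (le_trans (le_max_right _ _) (le_max_left _ _))
  -- the main estimate
  have hmain : sInf (ddSet θ p q) ≤ max (b1 θ q α d) (b2 θ p q α d) := by
    apply le_of_forall_pos_le_add
    intro ε hε
    obtain ⟨β, hβdef⟩ : ∃ β : ℝ,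
        β = min (min α (1 - α) / 2) (min (K / 2) (ε * (1 - θ) * d * K ^ 2 / 2)) := ⟨_, rfl⟩
    have hmin0 : 0 < min α (1 - α) / 2 := by
      apply div_pos (lt_min hα0 (by linarith)) (by norm_num)
    have hβ0 : 0 < β := by
      rw [hβdef]
      apply lt_min hmin0
      exact lt_min (by linarith)
        (div_pos (mul_pos (mul_pos (mul_pos hε hθd) hd) (pow_pos hK 2)) two_pos)
    have hβα : β ≤ α := by
      have h1 := min_le_left (min α (1 - α) / 2) (min (K / 2) (ε * (1 - θ) * d * K ^ 2 / 2))
      have h2 := min_le_left α (1 - α)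
      rw [← hβdef] at h1
      linarith
    have hβ1α : β ≤ 1 - α := by
      have h1 := min_le_left (min α (1 - α) / 2) (min (K / 2) (ε * (1 - θ) * d * K ^ 2 / 2))
      have h2 := min_le_right α (1 - α)
      rw [← hβdef] at h1
      linarith
    have hβK : β ≤ K / 2 := by
      rw [hβdef]; exact le_trans (min_le_right _ _) (min_le_left _ _)
    have hβε : β ≤ ε * (1 - θ) * d * K ^ 2 / 2 := by
      rw [hβdef]; exact le_trans (min_le_right _ _) (min_le_right _ _)
    have hβs3 : β < Real.exp (-d) * (1 - q) := lt_of_le_of_lt hβα (lt_of_lt_of_le hαu' hs3)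
    have hmem : max (max (c1 θ q α d) (c2 p q α d)) (max (c3 θ q β d) (c4 θ p q α β d))
        ∈ ddSet θ p q := ⟨d, α, β, hd, ⟨hαq, hαu⟩, ⟨hβ0, hβs3⟩, rfl⟩
    refine le_trans (csInf_le hbdd hmem) ?_
    have hεmax : max (b1 θ q α d) (b2 θ p q α d) ≤ max (b1 θ q α d) (b2 θ p q α d) + ε := by
      linarith
    have hone : (1:ℝ) ≤ 1 / (1 - θ) := by
      rw [le_div_iff₀ hθd]; linarith
    -- c2 bound
    have hc2 : c2 p q α d ≤ b2 θ p q α d := by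
      rw [hb2]; unfold c2; rw [← hKdef]
      have h1 : (0:ℝ) ≤ 1 / (d * K) := le_of_lt (one_div_pos.mpr (mul_pos hd hK))
      calc 1 / (d * K) = 1 * (1 / (d * K)) := (one_mul _).symm
        _ ≤ 1 / (1 - θ) * (1 / (d * K)) := mul_le_mul_of_nonneg_right hone h1
    -- c3 bound
    have hc3 : c3 θ q β d ≤ b2 θ p q α d := by
      have hm1 : klBer α ((1 - q) * Real.exp (-d)) ≤ klBer β ((1 - q) * Real.exp (-d)) :=
        klBer_anti hβ0 hβα (by rw [mul_comm]; linarith) (by rw [mul_comm]; exact hs31)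
      have hm2 : K ≤ klBer α ((1 - q) * Real.exp (-d)) := by
        rw [hKdef]
        exact klBer_mono_s hα0 hαu'.le (by rw [mul_comm]; exact hs3)
          (by rw [mul_comm]; exact hs31)
      unfold c3; rw [hb2]
      have h1 : 1 / (d * klBer β ((1 - q) * Real.exp (-d))) ≤ 1 / (d * K) :=
        one_div_le_one_div_of_le (mul_pos hd hK)
          (mul_le_mul_of_nonneg_left (le_trans hm2 hm1) hd.le)
      calc θ / (1 - θ) * (1 / (d * klBer β ((1 - q) * Real.exp (-d))))
          ≤ θ / (1 - θ) * (1 / (d * K)) :=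
            mul_le_mul_of_nonneg_left h1 (div_nonneg hθ0.le hθd.le)
        _ ≤ 1 / (1 - θ) * (1 / (d * K)) :=
            mul_le_mul_of_nonneg_right ((div_le_div_iff_of_pos_right hθd).mpr hθ1.le)
              (le_of_lt (one_div_pos.mpr (mul_pos hd hK)))
    -- c4 bound
    have hKβ : 0 < K - β := by linarith
    have hc4 : c4 θ p q α β d ≤ b2 θ p q α d + ε := by
      unfold c4
      have hSne : Set.Nonempty {x | ∃ z ∈ Set.Icc (1 - α) 1,
          x = 1 / (1 - θ) * (1 / (d * (klBer z (wDD p q d) +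
            (if β > z * (Real.exp (-d) * p) / wDD p q d then
              z * klBer (β / z) (Real.exp (-d) * p / wDD p q d) else 0))))} :=
        ⟨_, ⟨1, ⟨by linarith, le_rfl⟩, rfl⟩⟩
      have hM : ∀ x ∈ {x | ∃ z ∈ Set.Icc (1 - α) 1,
          x = 1 / (1 - θ) * (1 / (d * (klBer z (wDD p q d) +
            (if β > z * (Real.exp (-d) * p) / wDD p q d then
              z * klBer (β / z) (Real.exp (-d) * p / wDD p q d) else 0))))},
          x ≤ 1 / (1 - θ) * (1 / (d * (K - β))) := by
        rintro x ⟨z, ⟨hz1, hz2⟩, rfl⟩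
        have hzw : K ≤ klBer z (wDD p q d) := by
          have hgen : klBer (1 - α) (wDD p q d) ≤ klBer z (wDD p q d) :=
            klBer_mono hw0 hw1 (by linarith) hz1 hz2
          have heq : klBer (1 - α) (wDD p q d) = K := by
            rw [hKdef]
            have h := klBer_compl α (1 - wDD p q d)
            rw [sub_sub_cancel] at h
            exact h
          linarith
        have hextra : -β ≤ (if β > z * (Real.exp (-d) * p) / wDD p q d then
            z * klBer (β / z) (Real.exp (-d) * p / wDD p q d) else 0) := by
          split
          · apply extra_ge hβ0 (le_trans hβ1α hz1) hz2
            · exact div_nonneg (mul_nonneg hE0.le hp) hw0.le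
            · rw [div_lt_one hw0]; unfold wDD; nlinarith
          · linarith
        have hle : d * (K - β) ≤ d * (klBer z (wDD p q d) +
            (if β > z * (Real.exp (-d) * p) / wDD p q d then
              z * klBer (β / z) (Real.exp (-d) * p / wDD p q d) else 0)) := by
          apply mul_le_mul_of_nonneg_left _ hd.le
          linarith
        have h1 : 1 / (d * (klBer z (wDD p q d) +
            (if β > z * (Real.exp (-d) * p) / wDD p q d then
              z * klBer (β / z) (Real.exp (-d) * p / wDD p q d) else 0)))
            ≤ 1 / (d * (K - β)) := one_div_le_one_div_of_le (mul_pos hd hKβ) hle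
        exact mul_le_mul_of_nonneg_left h1 (le_of_lt (one_div_pos.mpr hθd))
      refine le_trans (csSup_le hSne hM) ?_
      -- now: 1/(1-θ) * (1/(d*(K-β))) ≤ b2 + ε
      rw [hb2]
      have e1 : 1 / (d * (K - β)) = 1 / (d * K) + β / (d * (K - β) * K) := by
        field_simp [hd.ne', hK.ne', hKβ.ne']
        ring
      have e2 : β / (d * (K - β) * K) ≤ ε * (1 - θ) := by
        rw [div_le_iff₀ (mul_pos (mul_pos hd hKβ) hK)]
        have hpos6 : (0:ℝ) ≤ ε * (1 - θ) * d := (mul_pos (mul_pos hε hθd) hd).le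
        have h6 : K ^ 2 / 2 ≤ (K - β) * K := by
          nlinarith [mul_le_mul_of_nonneg_left hβK hK.le]
        have h7 : ε * (1 - θ) * d * (K ^ 2 / 2) ≤ ε * (1 - θ) * d * ((K - β) * K) :=
          mul_le_mul_of_nonneg_left h6 hpos6
        nlinarith [hβε, h7]
      have e3 : 1 / (1 - θ) * (ε * (1 - θ)) = ε := by
        field_simp [hθd.ne']
      have e4 : 1 / (1 - θ) * (1 / (d * (K - β)))
          = 1 / (1 - θ) * (1 / (d * K)) + 1 / (1 - θ) * (β / (d * (K - β) * K)) := by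
        rw [← mul_add, ← e1]
      rw [e4]
      have e5 : 1 / (1 - θ) * (β / (d * (K - β) * K)) ≤ 1 / (1 - θ) * (ε * (1 - θ)) :=
        mul_le_mul_of_nonneg_left e2 (le_of_lt (one_div_pos.mpr hθd))
      rw [e3] at e5
      linarith
    -- combine
    have hc1 : c1 θ q α d = b1 θ q α d := rfl
    apply max_le (max_le ?_ ?_) (max_le ?_ ?_)
    · rw [hc1]; exact le_trans (le_max_left _ _) hεmax
    · exact le_trans hc2 (le_trans (le_max_right _ _) hεmax)
    · exact le_trans hc3 (le_trans (le_max_right _ _) hεmax)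
    · calc c4 θ p q α β d ≤ b2 θ p q α d + ε := hc4
        _ ≤ max (b1 θ q α d) (b2 θ p q α d) + ε := by
            have := le_max_right (b1 θ q α d) (b2 θ p q α d)
            linarith
  -- conclude
  have hcomp : sInf (compSet θ p q) = max (b1 θ q α d) (b2 θ p q α d) := hopt.csInf_eq
  have hfinal : sInf (ddSet θ p q) ≤ sInf (compSet θ p q) := by
    rw [hcomp]; exact hmain
  unfold mDD mCOMP
  exact mul_le_mul_of_nonneg_right hfinal (F_nonneg θ hθ0 hθ1 n)

end
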